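/- Let K be a field and (E,w) a row-finite weighted graph satisfying Condition (LPA). If e and f are distinct edges of E such that s(e), s(f) ∈ T(r(E¹_w)), then r(e) ≠ r(f). -/

import Mathlib

open FreeAlgebra
open scoped Classical

/-- A row-finite weighted graph: a directed graph with source `s`, range `r` and
a weight map `w : E¹ → {1,2,3,…}`, such that every vertex emits finitely many edges. -/
structure WGraph : Type 1 where
  V : Type
  E : Type
  s : E → V
  r : E → V
  w : E → ℕ
  w_pos : ∀ e, 0 < w e
  rowFinite : ∀ v, {e | s e = v}.Finite

namespace WGraph

variable (G : WGraph)

/-- The weight of a vertex: `w(v) = max {w(e) : e ∈ s⁻¹(v)}` (with `max ∅ = 0`). -/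
noncomputable def vw (v : G.V) : ℕ := (G.rowFinite v).toFinset.sup G.w

/-- One-step reachability: there is an edge from `u` to `v`. -/
def Adj (u v : G.V) : Prop := ∃ e, G.s e = u ∧ G.r e = v

/-- `u ≥ v`: there is a (possibly empty) path from `u` to `v`. -/
def Geq (u v : G.V) : Prop := Relation.ReflTransGen G.Adj u v

/-- An edge is weighted if its weight is `> 1`. -/
def Weighted (e : G.E) : Prop := 1 < G.w e

/-- Two edges are in line. -/
def InLine (e f : G.E) : Prop := e = f ∨ G.Geq (G.r e) (G.s f) ∨ G.Geq (G.r f) (G.s e)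

/-- `c` is a cycle based at `v`. -/
def IsCycleAt (c : List G.E) (v : G.V) : Prop :=
  ∃ h : c ≠ [], c.Chain' (fun a b => G.r a = G.s b) ∧ G.s (c.head h) = v ∧
    G.r (c.getLast h) = v ∧ (c.map G.s).Nodup

/-- Condition (LPA). -/
def LPA : Prop :=
  (∀ e f, G.Weighted e → G.Weighted f → G.s e = G.s f → e = f) ∧
  (∀ v, (∃ g, G.Weighted g ∧ G.Geq (G.r g) v) → ∀ e f, G.s e = v → G.s f = v → e = f) ∧
  (∀ e f, G.Weighted e → G.Weighted f → ¬ G.InLine e f →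
    ∀ v, ¬ (G.Geq (G.r e) v ∧ G.Geq (G.r f) v)) ∧
  (∀ e, G.Weighted e → ∀ v, G.Geq (G.r e) v → ∀ c, G.IsCycleAt c v → e ∈ c)

end WGraph

/-- The generators `v`, `e_i`, `e_i*` (for `1 ≤ i ≤ w(e)`) of the weighted
Leavitt path algebra. -/
inductive WGen (G : WGraph) : Type
  | vtx (v : G.V)
  | edge (e : G.E) (i : ℕ) (h1 : 1 ≤ i) (h2 : i ≤ G.w e)
  | ghost (e : G.E) (i : ℕ) (h1 : 1 ≤ i) (h2 : i ≤ G.w e)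

variable (G : WGraph) (K : Type) [Field K]

/-- The generator `v` in the free algebra. -/
def fvtx (v : G.V) : FreeAlgebra K (WGen G) := ι K (WGen.vtx v)

/-- The generator `e_i` in the free algebra, read as `0` when `i > w(e)`. -/
noncomputable def fedge (e : G.E) (i : ℕ) : FreeAlgebra K (WGen G) :=
  if h : 1 ≤ i ∧ i ≤ G.w e then ι K (WGen.edge e i h.1 h.2) else 0

/-- The generator `e_i*` in the free algebra, read as `0` when `i > w(e)`. -/
noncomputable def fghost (e : G.E) (i : ℕ) : FreeAlgebra K (WGen G) :=
  if h : 1 ≤ i ∧ i ≤ G.w e then ι K (WGen.ghost e i h.1 h.2) else 0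

/-- The defining relations of the weighted Leavitt path algebra. -/
inductive WRel : FreeAlgebra K (WGen G) → FreeAlgebra K (WGen G) → Prop
  | vtxMul (u v : G.V) :
      WRel (fvtx G K u * fvtx G K v) (if u = v then fvtx G K u else 0)
  | srcEdge (e : G.E) (i : ℕ) :
      WRel (fvtx G K (G.s e) * fedge G K e i) (fedge G K e i)
  | edgeRng (e : G.E) (i : ℕ) :
      WRel (fedge G K e i * fvtx G K (G.r e)) (fedge G K e i)
  | rngGhost (e : G.E) (i : ℕ) :
      WRel (fvtx G K (G.r e) * fghost G K e i) (fghost G K e i)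
  | ghostSrc (e : G.E) (i : ℕ) :
      WRel (fghost G K e i * fvtx G K (G.s e)) (fghost G K e i)
  | ck1 (v : G.V) (e f : G.E) (he : G.s e = v) (hf : G.s f = v) :
      WRel (∑ i ∈ Finset.Icc 1 (G.vw v), fghost G K e i * fedge G K f i)
           (if e = f then fvtx G K (G.r e) else 0)
  | ck2 (v : G.V) (i j : ℕ) (hi1 : 1 ≤ i) (hi2 : i ≤ G.vw v) (hj1 : 1 ≤ j) (hj2 : j ≤ G.vw v) :
      WRel (∑ e ∈ (G.rowFinite v).toFinset, fedge G K e i * fghost G K e j)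
           (if i = j then fvtx G K v else 0)

/-- The weighted Leavitt path algebra `L_K(E,w)`, presented by generators and relations. -/
abbrev WLPA : Type := RingQuot (WRel G K)

/-- The canonical quotient map from the free algebra to `L_K(E,w)`. -/
noncomputable def wmk : FreeAlgebra K (WGen G) →ₐ[K] WLPA G K :=
  RingQuot.mkAlgHom K (WRel G K)

/-- The image of a generator in `L_K(E,w)`. -/
noncomputable def gen (x : WGen G) : WLPA G K := wmk G K (ι K x)

/-- The image in `L_K(E,w)` of a word over the generating set. -/
noncomputable def wordElem (xs : List (WGen G)) : WLPA G K := (xs.map (gen G K)).prod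

/-- Source of a letter (with the usual conventions). -/
def gsrc : WGen G → G.V
  | .vtx v => v
  | .edge e _ _ _ => G.s e
  | .ghost e _ _ _ => G.r e

/-- Range of a letter (with the usual conventions). -/
def grng : WGen G → G.V
  | .vtx v => v
  | .edge e _ _ _ => G.r e
  | .ghost e _ _ _ => G.s e

/-- Whether a letter is a vertex letter. -/
def IsVertexLetter : WGen G → Prop
  | .vtx _ => True
  | _ => False

/-- A d-path: a nonempty word which is either a single vertex letter, or consists of
non-vertex letters with matching ranges and sources. -/
def IsDPath (xs : List (WGen G)) : Prop :=
  (∃ v, xs = [WGen.vtx v]) ∨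
  (xs ≠ [] ∧ (∀ x ∈ xs, ¬ IsVertexLetter G x) ∧ xs.Chain' (fun a b => grng G a = gsrc G b))

/-- `sp` is a choice of special edges: for every non-sink `v`, `sp v ∈ s⁻¹(v)`
and `w(sp v) = w(v)`. -/
def IsSpecialChoice (sp : G.V → G.E) : Prop :=
  ∀ v : G.V, (∃ e, G.s e = v) → G.s (sp v) = v ∧ G.w (sp v) = G.vw v

/-- The forbidden two-letter words: `(e^v)_i ((e^v)_j)*` for a special edge `e^v`, and
`e_1* f_1` for arbitrary edges `e, f`. -/
def Forbidden (sp : G.V → G.E) : WGen G → WGen G → Prop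
  | WGen.edge e _ _ _, WGen.ghost f _ _ _ => e = f ∧ sp (G.s e) = e
  | WGen.ghost _ i _ _, WGen.edge _ j _ _ => i = 1 ∧ j = 1
  | _, _ => False

/-- A nod-path: a d-path none of whose subwords is forbidden. -/
def IsNod (sp : G.V → G.E) (xs : List (WGen G)) : Prop :=
  IsDPath G xs ∧ xs.Chain' (fun a b => ¬ Forbidden G sp a b)

/-- The degree of a letter in `⊕_{i∈ℕ} ℤ`. -/
noncomputable def gdeg : WGen G → (ℕ →₀ ℤ)
  | .vtx _ => 0
  | .edge _ i _ _ => Finsupp.single i 1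
  | .ghost _ i _ _ => - Finsupp.single i 1

/-- The homogeneous component of degree `d` of `L_K(E,w)` with respect to the
canonical grading: the span of the images of all words of degree `d`. -/
noncomputable def homComp (d : ℕ →₀ ℤ) : Submodule K (WLPA G K) :=
  Submodule.span K {x | ∃ xs : List (WGen G), (xs.map (gdeg G)).sum = d ∧ x = wordElem G K xs}

/-- `V^(m)`: the span of all products of at most `m` elements of `V`. -/
def pileSpan (K A : Type) [Field K] [Ring A] [Algebra K A] (V : Set A) (m : ℕ) :
    Submodule K A :=
  Submodule.span K {x | ∃ l : List A, l ≠ [] ∧ l.length ≤ m ∧ (∀ a ∈ l, a ∈ V) ∧ x = l.prod}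

section StmtZeroAux

variable {G : WGraph}

/-- Deterministic step: follow the (chosen) outgoing edge, if any. -/
noncomputable def wstep (G : WGraph) (v : G.V) : G.V :=
  if h : ∃ x, G.s x = v then G.r h.choose else v

lemma adj_wstep {v u : G.V}
    (uniqv : ∀ a b, G.s a = v → G.s b = v → a = b)
    (h : G.Adj v u) : u = wstep G v := by
  obtain ⟨x, hx, rfl⟩ := h
  have hex : ∃ x, G.s x = v := ⟨x, hx⟩
  rw [wstep, dif_pos hex, uniqv x hex.choose hx hex.choose_spec]

lemma wstep_adj {v : G.V} (h : ∃ x, G.s x = v) : G.Adj v (wstep G v) := by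
  rw [wstep, dif_pos h]; exact ⟨h.choose, h.choose_spec, rfl⟩

lemma wdirected {P : G.V → Prop}
    (uniq : ∀ v, P v → ∀ a b, G.s a = v → G.s b = v → a = b)
    (u a : G.V) (hua : G.Geq u a) :
    P u → (∀ x y, P x → G.Adj x y → P y) → ∀ b, G.Geq u b → G.Geq a b ∨ G.Geq b a := by
  induction hua using Relation.ReflTransGen.head_induction_on with
  | refl => exact fun _ _ b hb => Or.inl hb
  | head hadj htail ih =>
    intro hu hcl b hub
    rcases hub.cases_head with rfl | ⟨m, hadj', hm⟩
    · exact Or.inr (Relation.ReflTransGen.head hadj htail)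
    · obtain ⟨x, hx, hrx⟩ := hadj
      obtain ⟨y, hy, hry⟩ := hadj'
      have hxy : x = y := uniq _ hu x y hx hy
      have hP : P (G.r x) := hcl _ _ hu ⟨x, hx, rfl⟩
      rw [hrx] at hP
      refine ih hP hcl b ?_
      rw [← hrx, hxy, hry]; exact hm

lemma wgeq_closed {P : G.V → Prop}
    (hcl : ∀ x y, P x → G.Adj x y → P y)
    {u a : G.V} (hu : P u) (h : G.Geq u a) : P a := by
  induction h with
  | refl => exact hu
  | tail h1 h2 ih => exact hcl _ _ ih h2

lemma witer_reach {P : G.V → Prop}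
    (uniq : ∀ v, P v → ∀ a b, G.s a = v → G.s b = v → a = b)
    (hcl : ∀ x y, P x → G.Adj x y → P y)
    {u a : G.V} (hu : P u) (hua : G.Geq u a) : ∃ n, (wstep G)^[n] u = a := by
  induction hua with
  | refl => exact ⟨0, rfl⟩
  | @tail b c hub hadj ih =>
    obtain ⟨n, hn⟩ := ih
    have hPb : P b := wgeq_closed hcl hu hub
    refine ⟨n + 1, ?_⟩
    rw [Function.iterate_succ_apply', hn]
    exact (adj_wstep (uniq _ hPb) hadj).symm

/-- The core contradiction. -/
lemma stmt0_core (G : WGraph) (h : G.LPA)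
    (g e f : G.E) (hg : G.Weighted g)
    (hge : G.Geq (G.r g) (G.s e)) (hgf : G.Geq (G.r g) (G.s f))
    (hre : G.r e = G.r f) (hef : e ≠ f) (hsef : G.Geq (G.s e) (G.s f)) : False := by
  classical
  have uniq : ∀ v, G.Geq (G.r g) v → ∀ a b, G.s a = v → G.s b = v → a = b := fun v hv =>
    h.2.1 v ⟨g, hg, hv⟩
  have hcl : ∀ x y, G.Geq (G.r g) x → G.Adj x y → G.Geq (G.r g) y := fun x y hx hxy =>
    hx.trans (Relation.ReflTransGen.single hxy)
  -- s e ≠ s f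
  have hne : G.s e ≠ G.s f := fun hv => hef (uniq _ hge e f rfl hv.symm)
  -- G.Geq (G.r f) (G.s f)
  have hcw : G.Geq (G.r f) (G.s f) := by
    rcases hsef.cases_head with hv | ⟨m, hadj, hm⟩
    · exact absurd hv hne
    · obtain ⟨x, hx, hrx⟩ := hadj
      have hxe : x = e := uniq _ hge x e hx rfl
      rw [← hre, ← hxe, hrx]; exact hm
  have hPv0 : G.Geq (G.r g) (G.r f) := hgf.trans (Relation.ReflTransGen.single ⟨f, rfl, rfl⟩)
  have hedge0 : ∃ x, G.s x = G.r f := by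
    rcases hcw.cases_head with hv | ⟨m, ⟨x, hx, _⟩, _⟩
    · exact ⟨f, hv.symm⟩
    · exact ⟨x, hx⟩
  -- the deterministic walk from r f returns to r f
  obtain ⟨k, hk⟩ := witer_reach uniq hcl hPv0 hcw
  have hret : (wstep G)^[k + 1] (G.r f) = G.r f := by
    have h1 : G.r f = wstep G (G.s f) := adj_wstep (uniq _ hgf) ⟨f, rfl, rfl⟩
    rw [Function.iterate_succ_apply', hk, ← h1]
  -- minimal period
  have hex : ∃ q, 0 < q ∧ (wstep G)^[q] (G.r f) = G.r f := ⟨k + 1, Nat.succ_pos _, hret⟩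
  set p : ℕ := Nat.find hex with hpdef
  have hp : 0 < p ∧ (wstep G)^[p] (G.r f) = G.r f := Nat.find_spec hex
  have hpmin : ∀ m, m < p → ¬(0 < m ∧ (wstep G)^[m] (G.r f) = G.r f) := fun m hm =>
    Nat.find_min hex hm
  -- periodicity
  have hmul : ∀ q, (wstep G)^[q * p] (G.r f) = G.r f := by
    intro q
    induction q with
    | zero => simp
    | succ q ih => rw [Nat.succ_mul, Function.iterate_add_apply, hp.2, ih]
  have hmod : ∀ n, (wstep G)^[n] (G.r f) = (wstep G)^[n % p] (G.r f) := by
    intro n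
    conv_lhs => rw [← Nat.mod_add_div n p]
    rw [Function.iterate_add_apply, Nat.mul_comm p (n / p), hmul]
  -- all iterates have outgoing edges
  have hedge : ∀ i, ∃ x, G.s x = (wstep G)^[i] (G.r f) := by
    intro i
    by_contra hno
    have hfix : wstep G ((wstep G)^[i] (G.r f)) = (wstep G)^[i] (G.r f) := dif_neg hno
    have hconst : ∀ j, (wstep G)^[i + j] (G.r f) = (wstep G)^[i] (G.r f) := by
      intro j
      induction j with
      | zero => rfl
      | succ j ih =>
        rw [← Nat.add_assoc, Function.iterate_succ_apply', ih, hfix]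
    have h1 : (wstep G)^[(i + 1) * p] (G.r f) = G.r f := hmul _
    have h2 : (wstep G)^[(i + 1) * p] (G.r f) = (wstep G)^[i] (G.r f) := by
      have hle : i ≤ (i + 1) * p := by
        calc i ≤ (i + 1) * 1 := by omega
          _ ≤ (i + 1) * p := Nat.mul_le_mul_left _ hp.1
      have heq : (i + 1) * p = i + ((i + 1) * p - i) := by omega
      rw [heq]; exact hconst _
    rw [h1] at h2
    exact hno (h2 ▸ hedge0)
  -- reachability from r f and from r g for all iterates
  have hreach : ∀ n, G.Geq (G.r f) ((wstep G)^[n] (G.r f)) := by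
    intro n
    induction n with
    | zero => exact Relation.ReflTransGen.refl
    | succ n ih =>
      rw [Function.iterate_succ_apply']
      exact ih.trans (Relation.ReflTransGen.single (wstep_adj (hedge n)))
  have hPit : ∀ n, G.Geq (G.r g) ((wstep G)^[n] (G.r f)) := fun n => hPv0.trans (hreach n)
  -- injectivity of iterates below p
  have hinj : ∀ i j, i < p → j < p →
      (wstep G)^[i] (G.r f) = (wstep G)^[j] (G.r f) → i = j := by
    have key : ∀ i j, i ≤ j → j < p →
        (wstep G)^[i] (G.r f) = (wstep G)^[j] (G.r f) → i = j := by
      intro i j hij hjp heq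
      by_contra hne'
      have hd : 0 < j - i := by omega
      have h1 : (wstep G)^[p - (j - i)] (G.r f) = G.r f := by
        have e2 := hp.2
        have e1 : p = (p - j) + j := by omega
        rw [e1, Function.iterate_add_apply, ← heq, ← Function.iterate_add_apply] at e2
        have e4 : p - j + i = p - (j - i) := by omega
        rw [e4] at e2
        exact e2
      exact hpmin _ (by omega) ⟨by omega, h1⟩
    intro i j hi hj heq
    rcases le_total i j with hij | hji
    · exact key i j hij hj heq
    · exact (key j i hji hi heq.symm).symm
  -- the canonical edge at each iterate
  have hseds : ∀ i, G.s ((hedge i).choose) = (wstep G)^[i] (G.r f) := fun i =>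
    (hedge i).choose_spec
  have hreds : ∀ i, G.r ((hedge i).choose) = (wstep G)^[i + 1] (G.r f) := by
    intro i
    have hadj : G.Adj ((wstep G)^[i] (G.r f)) (G.r ((hedge i).choose)) :=
      ⟨(hedge i).choose, hseds i, rfl⟩
    rw [Function.iterate_succ_apply']
    exact adj_wstep (uniq _ (hPit i)) hadj
  -- the cycle
  set cyl : List G.E := (List.range p).map (fun i => (hedge i).choose) with hc
  have hclen : cyl.length = p := by rw [hc]; simp
  have hcne : cyl ≠ [] := by
    intro hnil
    rw [hnil] at hclen
    simp at hclen
    omega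
  have hcget : ∀ (i : ℕ) (hi : i < cyl.length), cyl[i]'hi = (hedge i).choose := by
    intro i hi
    simp only [hc, List.getElem_map, List.getElem_range]
  have hcyc : G.IsCycleAt cyl (G.r f) := by
    refine ⟨hcne, ?_, ?_, ?_, ?_⟩
    · refine List.isChain_iff_getElem.mpr ?_
      intro i hi
      rw [hcget, hcget, hreds]
      exact (hseds (i + 1)).symm
    · rw [List.head_eq_getElem_zero hcne, hcget]
      exact hseds 0
    · rw [List.getLast_eq_getElem, hcget, hreds]
      have h5 : cyl.length - 1 + 1 = p := by omega
      rw [h5]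
      exact hp.2
    · have hmap : cyl.map G.s = (List.range p).map (fun i => (wstep G)^[i] (G.r f)) := by
        rw [hc, List.map_map]
        exact List.map_congr_left fun i _ => hseds i
      rw [hmap]
      refine List.Nodup.map_on ?_ (List.nodup_range (n := p))
      intro i hi j hj hij
      rw [List.mem_range] at hi hj
      exact hinj i j hi hj hij
  -- LPA4: g belongs to the cycle
  have hgc : g ∈ cyl := h.2.2.2 g hg (G.r f) hPv0 cyl hcyc
  rw [hc, List.mem_map] at hgc
  obtain ⟨i, hi, hgi⟩ := hgc
  rw [List.mem_range] at hi
  -- the orbit is closed under reachability from r g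
  have horb : ∀ a, G.Geq (G.r g) a → ∃ n, (wstep G)^[n] (G.r f) = a := by
    have hrg : ∃ n, (wstep G)^[n] (G.r f) = G.r g :=
      ⟨i + 1, (hreds i).symm.trans (congrArg G.r hgi)⟩
    intro a ha
    induction ha with
    | refl => exact hrg
    | @tail b cyl' hub hadj ih =>
      obtain ⟨n, hn⟩ := ih
      refine ⟨n + 1, ?_⟩
      rw [Function.iterate_succ_apply']
      exact (adj_wstep (uniq _ (hn ▸ hPit n)) (hn ▸ hadj)).symm
  -- s e and s f are on the orbit
  obtain ⟨n, hn⟩ := horb (G.s e) hge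
  obtain ⟨m, hm⟩ := horb (G.s f) hgf
  have hnp : n % p < p := Nat.mod_lt _ hp.1
  have hmp : m % p < p := Nat.mod_lt _ hp.1
  have hne' : (hedge (n % p)).choose = e :=
    uniq _ hge _ e (by rw [hseds, ← hmod, hn]) rfl
  have hmf' : (hedge (m % p)).choose = f :=
    uniq _ hgf _ f (by rw [hseds, ← hmod, hm]) rfl
  -- ranges coincide, hence indices coincide
  have hiter : (wstep G)^[n % p + 1] (G.r f) = (wstep G)^[m % p + 1] (G.r f) := by
    rw [← hreds, ← hreds, hne', hmf', hre]
  have hmodeq : (n % p + 1) % p = (m % p + 1) % p :=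
    hinj _ _ (Nat.mod_lt _ hp.1) (Nat.mod_lt _ hp.1)
      (by rw [← hmod, ← hmod]; exact hiter)
  have hnm : n % p = m % p := by
    rcases Nat.lt_or_ge (n % p + 1) p with ha | ha <;>
      rcases Nat.lt_or_ge (m % p + 1) p with hb | hb
    · rw [Nat.mod_eq_of_lt ha, Nat.mod_eq_of_lt hb] at hmodeq; omega
    · have hb' : m % p + 1 = p := by omega
      rw [Nat.mod_eq_of_lt ha, hb', Nat.mod_self] at hmodeq; omega
    · have ha' : n % p + 1 = p := by omega
      rw [ha', Nat.mod_self, Nat.mod_eq_of_lt hb] at hmodeq; omega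
    · omega
  exact hef (hne'.symm.trans ((congrArg (fun x => (hedge x).choose) hnm).trans hmf'))

end StmtZeroAux

/-- If `(E,w)` satisfies Condition (LPA) and `e ≠ f` are edges whose sources lie
in `T(r(E¹_w))`, then `r(e) ≠ r(f)`. -/
theorem stmt0 (K : Type) [Field K] (G : WGraph) (h : G.LPA)
    (e f : G.E) (hef : e ≠ f)
    (he : ∃ g, G.Weighted g ∧ G.Geq (G.r g) (G.s e))
    (hf : ∃ g, G.Weighted g ∧ G.Geq (G.r g) (G.s f)) :
    G.r e ≠ G.r f := by
  intro hre
  obtain ⟨ge, hgew, hgee⟩ := he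
  obtain ⟨gf, hgfw, hgff⟩ := hf
  -- find a single weighted edge g reaching both s e and s f
  have hg : ∃ g, G.Weighted g ∧ G.Geq (G.r g) (G.s e) ∧ G.Geq (G.r g) (G.s f) := by
    by_cases hil : G.InLine ge gf
    · rcases hil with rfl | hl | hl
      · exact ⟨ge, hgew, hgee, hgff⟩
      · refine ⟨ge, hgew, hgee, ?_⟩
        exact (hl.trans (Relation.ReflTransGen.single ⟨gf, rfl, rfl⟩)).trans hgff
      · refine ⟨gf, hgfw, ?_, hgff⟩
        exact (hl.trans (Relation.ReflTransGen.single ⟨ge, rfl, rfl⟩)).trans hgee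
    · exfalso
      refine h.2.2.1 ge gf hgew hgfw hil (G.r e) ⟨?_, ?_⟩
      · exact hgee.trans (Relation.ReflTransGen.single ⟨e, rfl, rfl⟩)
      · rw [hre]
        exact hgff.trans (Relation.ReflTransGen.single ⟨f, rfl, rfl⟩)
  obtain ⟨g, hgw, hgse, hgsf⟩ := hg
  have uniq : ∀ v, G.Geq (G.r g) v → ∀ a b, G.s a = v → G.s b = v → a = b := fun v hv =>
    h.2.1 v ⟨g, hgw, hv⟩
  have hcl : ∀ x y, G.Geq (G.r g) x → G.Adj x y → G.Geq (G.r g) y := fun x y hx hxy =>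
    hx.trans (Relation.ReflTransGen.single hxy)
  have hdir := wdirected (P := fun v => G.Geq (G.r g) v) uniq (G.r g) (G.s e) hgse
    Relation.ReflTransGen.refl hcl (G.s f) hgsf
  rcases hdir with hd | hd
  · exact stmt0_core G h g e f hgw hgse hgsf hre hef hd
  · exact stmt0_core G h g f e hgw hgsf hgse hre.symm hef.symm hd
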